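/- Let G be a connected graph of order n ≥ 2 without true twin vertices, let H be a connected graph of order m ≥ 2 with diam(H) ≤ 2, and set n' = |M(G)| and m' = |M(H)|. Then sdim_f(G[H]) ≥ max{ n·sdim_f(H) + (m − m')·sdim_f(G), (n − n')·sdim_f(H) + m·sdim_f(G) } and sdim_f(G[H]) ≤ (n·m' + m·n' − n'·m')/2. -/

import Mathlib

open SimpleGraph

/-- `Sset G x y` is the set `S{x,y}` of vertices `z` such that `x` lies on some shortest
`y`–`z` path or `y` lies on some shortest `x`–`z` path in `G`. -/
def Sset {V : Type*} (G : SimpleGraph V) (x y : V) : Set V :=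
  {z | (∃ p : G.Walk y z, p.length = G.dist y z ∧ x ∈ p.support) ∨
       (∃ p : G.Walk x z, p.length = G.dist x z ∧ y ∈ p.support)}

/-- A strong resolving function of `G`: `g : V → [0,1]` with `g(S{x,y}) ≥ 1` for all
distinct vertices `x, y`. -/
def IsSRF {V : Type*} (G : SimpleGraph V) (g : V → ℝ) : Prop :=
  (∀ v, 0 ≤ g v ∧ g v ≤ 1) ∧ ∀ x y : V, x ≠ y → 1 ≤ ∑ᶠ z ∈ Sset G x y, g z

/-- The fractional strong metric dimension of `G`. -/
noncomputable def sdimf {V : Type*} (G : SimpleGraph V) : ℝ :=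
  sInf {s : ℝ | ∃ g : V → ℝ, IsSRF G g ∧ s = ∑ᶠ v, g v}

/-- A strong resolving set of `G`: every pair of distinct vertices is strongly resolved
by some vertex of `S` (i.e. some vertex of `S` lies in `S{x,y}`). -/
def IsSRSet {V : Type*} (G : SimpleGraph V) (S : Set V) : Prop :=
  ∀ x y : V, x ≠ y → ∃ z ∈ S, z ∈ Sset G x y

/-- The strong metric dimension of `G`: the minimum cardinality of a strong resolving set. -/
noncomputable def sdim {V : Type*} (G : SimpleGraph V) : ℕ :=
  sInf {n : ℕ | ∃ S : Set V, IsSRSet G S ∧ S.ncard = n}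

/-- `u` is maximally distant from `v`: `d(u,v) ≥ d(w,v)` for every neighbor `w` of `u`. -/
def MaxDistFrom {V : Type*} (G : SimpleGraph V) (u v : V) : Prop :=
  ∀ w : V, G.Adj u w → G.dist w v ≤ G.dist u v

/-- `u` and `v` are mutually maximally distant (MMD) in `G`. -/
def MMD {V : Type*} (G : SimpleGraph V) (u v : V) : Prop :=
  u ≠ v ∧ MaxDistFrom G u v ∧ MaxDistFrom G v u

/-- The strong resolving graph of `G` (on the ambient vertex set): `u ~ v` iff `u` MMD `v`. -/
def SRGraph {V : Type*} (G : SimpleGraph V) : SimpleGraph V where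
  Adj := MMD G
  symm := ⟨fun _ _ h => ⟨h.1.symm, h.2.2, h.2.1⟩⟩
  loopless := ⟨fun _ h => h.1 rfl⟩

/-- `M(G)`: the set of vertices that are mutually maximally distant with some vertex. -/
def Mset {V : Type*} (G : SimpleGraph V) : Set V := {x | ∃ y, MMD G x y}

/-- The matching number of `G`. -/
noncomputable def matchNum {V : Type*} (G : SimpleGraph V) : ℕ :=
  sSup {n : ℕ | ∃ M : G.Subgraph, M.IsMatching ∧ M.edgeSet.ncard = n}

/-- The corona product `G ⊙ H`. -/
def corona {V W : Type*} (G : SimpleGraph V) (H : SimpleGraph W) :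
    SimpleGraph (V ⊕ V × W) where
  Adj x y :=
    match x, y with
    | Sum.inl u, Sum.inl u' => G.Adj u u'
    | Sum.inl u, Sum.inr iw => u = iw.1
    | Sum.inr iw, Sum.inl u => iw.1 = u
    | Sum.inr iw, Sum.inr iw' => iw.1 = iw'.1 ∧ H.Adj iw.2 iw'.2
  symm := by
    constructor
    rintro (u | iw) (u' | iw') h
    · exact h.symm
    · exact h.symm
    · exact h.symm
    · exact ⟨h.1.symm, h.2.symm⟩
  loopless := by
    constructor
    rintro (u | iw) h
    · exact h.ne rfl
    · exact h.2.ne rfl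

/-- `K₁ ⊙ H`: the graph obtained from `H` by adding one new vertex adjacent to every
vertex of `H`. -/
def cone {W : Type*} (H : SimpleGraph W) : SimpleGraph (Option W) where
  Adj x y :=
    match x, y with
    | none, none => False
    | none, some _ => True
    | some _, none => True
    | some w, some w' => H.Adj w w'
  symm := by
    constructor
    rintro (_ | w) (_ | w') h
    · exact h
    · exact trivial
    · exact trivial
    · exact h.symm
  loopless := by
    constructor
    rintro (_ | w) h
    · exact h
    · exact h.ne rfl

/-- The lexicographic product `G[H]`. -/
def lexProd {V W : Type*} (G : SimpleGraph V) (H : SimpleGraph W) :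
    SimpleGraph (V × W) where
  Adj x y := G.Adj x.1 y.1 ∨ (x.1 = y.1 ∧ H.Adj x.2 y.2)
  symm := by
    constructor
    rintro x y (h | ⟨h1, h2⟩)
    · exact Or.inl h.symm
    · exact Or.inr ⟨h1.symm, h2.symm⟩
  loopless := by
    constructor
    rintro x (h | ⟨_, h2⟩)
    · exact h.ne rfl
    · exact h2.ne rfl

/-- `SL{x,y} = (N[x] ∪ N[y]) ∩ S{x,y}`. -/
def SLset {W : Type*} (H : SimpleGraph W) (x y : W) : Set W :=
  (insert x (H.neighborSet x) ∪ insert y (H.neighborSet y)) ∩ Sset H x y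

/-- A strong locating function of `H`. -/
def IsSLF {W : Type*} (H : SimpleGraph W) (f : W → ℝ) : Prop :=
  (∀ v, 0 ≤ f v ∧ f v ≤ 1) ∧ ∀ x y : W, x ≠ y → 1 ≤ ∑ᶠ z ∈ SLset H x y, f z

/-- `sl_f(H)`: the minimum weight of a strong locating function of `H`. -/
noncomputable def slf {W : Type*} (H : SimpleGraph W) : ℝ :=
  sInf {s : ℝ | ∃ f : W → ℝ, IsSLF H f ∧ s = ∑ᶠ v, f v}

/-- `u` has a true twin: some other vertex with the same closed neighborhood. -/
def HasTrueTwin {V : Type*} (G : SimpleGraph V) (u : V) : Prop :=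
  ∃ v : V, v ≠ u ∧ insert v (G.neighborSet v) = insert u (G.neighborSet u)

/-- `u` has a false twin: some other vertex with the same open neighborhood. -/
def HasFalseTwin {V : Type*} (G : SimpleGraph V) (u : V) : Prop :=
  ∃ v : V, v ≠ u ∧ G.neighborSet v = G.neighborSet u

/-- `m₁(G)`: number of vertices in type-1 (singleton) classes of the twin relation. -/
noncomputable def m1 {V : Type*} (G : SimpleGraph V) : ℕ :=
  {u : V | ¬ HasTrueTwin G u ∧ ¬ HasFalseTwin G u}.ncard

/-- `m₂(G)`: number of vertices in type-2 (clique) classes of the twin relation. -/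
noncomputable def m2 {V : Type*} (G : SimpleGraph V) : ℕ :=
  {u : V | HasTrueTwin G u}.ncard

/-- `m₃(G)`: number of vertices in type-3 (independent set) classes of the twin relation. -/
noncomputable def m3 {V : Type*} (G : SimpleGraph V) : ℕ :=
  {u : V | HasFalseTwin G u}.ncard

/-- The strong resolving graph of `G` (whose vertex set is `M(G)`) is Hamiltonian:
there is a cycle in `SRGraph G` passing through every vertex of `M(G)`. -/
def SRHamiltonian {V : Type*} (G : SimpleGraph V) : Prop :=
  ∃ (u : V) (p : (SRGraph G).Walk u u), p.IsCycle ∧ ∀ v ∈ Mset G, v ∈ p.support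

section Basic

variable {V : Type*} {G : SimpleGraph V} {x y z u v : V}

lemma mem_Sset_iff (hc : G.Connected) :
    z ∈ Sset G x y ↔ G.dist y x + G.dist x z = G.dist y z ∨
      G.dist x y + G.dist y z = G.dist x z := by
  classical
  constructor
  · rintro (⟨p, hl, hm⟩ | ⟨p, hl, hm⟩)
    · left
      have h1 := SimpleGraph.dist_le (p.takeUntil x hm)
      have h2 := SimpleGraph.dist_le (p.dropUntil x hm)
      have h3 : (p.takeUntil x hm).length + (p.dropUntil x hm).length = p.length := by
        rw [← SimpleGraph.Walk.length_append, SimpleGraph.Walk.take_spec]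
      have h4 := hc.dist_triangle (u := y) (v := x) (w := z)
      omega
    · right
      have h1 := SimpleGraph.dist_le (p.takeUntil y hm)
      have h2 := SimpleGraph.dist_le (p.dropUntil y hm)
      have h3 : (p.takeUntil y hm).length + (p.dropUntil y hm).length = p.length := by
        rw [← SimpleGraph.Walk.length_append, SimpleGraph.Walk.take_spec]
      have h4 := hc.dist_triangle (u := x) (v := y) (w := z)
      omega
  · rintro (h | h)
    · obtain ⟨p, hp⟩ := hc.exists_walk_length_eq_dist y x
      obtain ⟨q, hq⟩ := hc.exists_walk_length_eq_dist x z
      exact Or.inl ⟨p.append q, by rw [SimpleGraph.Walk.length_append, hp, hq, h],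
        by simp [SimpleGraph.Walk.mem_support_append_iff]⟩
    · obtain ⟨p, hp⟩ := hc.exists_walk_length_eq_dist x y
      obtain ⟨q, hq⟩ := hc.exists_walk_length_eq_dist y z
      exact Or.inr ⟨p.append q, by rw [SimpleGraph.Walk.length_append, hp, hq, h],
        by simp [SimpleGraph.Walk.mem_support_append_iff]⟩

lemma left_mem_Sset (hc : G.Connected) : x ∈ Sset G x y := by
  rw [mem_Sset_iff hc]
  left; simp

lemma right_mem_Sset (hc : G.Connected) : y ∈ Sset G x y := by
  rw [mem_Sset_iff hc]
  right; simp

lemma Sset_eq_of_MMD (hc : G.Connected) (h : MMD G u v) :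
    Sset G u v = {u, v} := by
  classical
  ext z
  constructor
  · rw [mem_Sset_iff hc]
    intro hz
    by_contra hzm
    simp only [Set.mem_insert_iff, Set.mem_singleton_iff, not_or] at hzm
    obtain ⟨hzu, hzv⟩ := hzm
    rcases hz with hz | hz
    · -- dist v u + dist u z = dist v z, z ≠ u
      have hpos : G.dist u z ≠ 0 :=
        fun h0 => hzu ((hc.dist_eq_zero_iff).mp h0).symm
      obtain ⟨p, hp⟩ := hc.exists_walk_length_eq_dist u z
      cases p with
      | nil => simp at hp; omega
      | cons hadj q =>
        rename_i w
        have hq : G.dist w z ≤ q.length := SimpleGraph.dist_le q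
        have hlen : q.length + 1 = G.dist u z := by
          simpa [SimpleGraph.Walk.length_cons] using hp
        have hmax : G.dist w v ≤ G.dist u v := h.2.1 w hadj
        have ht : G.dist v z ≤ G.dist v w + G.dist w z := hc.dist_triangle
        have hc1 : G.dist v w = G.dist w v := SimpleGraph.dist_comm
        have hc2 : G.dist v u = G.dist u v := SimpleGraph.dist_comm
        omega
    · have hpos : G.dist v z ≠ 0 :=
        fun h0 => hzv ((hc.dist_eq_zero_iff).mp h0).symm
      obtain ⟨p, hp⟩ := hc.exists_walk_length_eq_dist v z
      cases p with
      | nil => simp at hp; omega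
      | cons hadj q =>
        rename_i w
        have hq : G.dist w z ≤ q.length := SimpleGraph.dist_le q
        have hlen : q.length + 1 = G.dist v z := by
          simpa [SimpleGraph.Walk.length_cons] using hp
        have hmax : G.dist w u ≤ G.dist v u := h.2.2 w hadj
        have ht : G.dist u z ≤ G.dist u w + G.dist w z := hc.dist_triangle
        have hc1 : G.dist u w = G.dist w u := SimpleGraph.dist_comm
        have hc2 : G.dist u v = G.dist v u := SimpleGraph.dist_comm
        omega
  · rintro (rfl | rfl)
    · exact left_mem_Sset hc
    · exact right_mem_Sset hc

end Basic

section MMDex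

variable {V : Type*} [Fintype V] {G : SimpleGraph V} {x y : V}

lemma exists_MMD_mem_Sset (hc : G.Connected) (hxy : x ≠ y) :
    ∃ u v, MMD G u v ∧ u ∈ Sset G x y ∧ v ∈ Sset G x y := by
  classical
  -- step 1 : pick u maximizing dist y u among A
  set A : Finset V := Finset.univ.filter (fun u => G.dist y x + G.dist x u = G.dist y u)
    with hA
  have hxA : x ∈ A := by simp [hA]
  obtain ⟨u, huA, hu⟩ := A.exists_max_image (fun u => G.dist y u) ⟨x, hxA⟩
  have huA' : G.dist y x + G.dist x u = G.dist y u := by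
    simpa [hA] using huA
  have huy : MaxDistFrom G u y := by
    intro w hw
    by_contra hlt
    push_neg at hlt
    have hdw : G.dist u w = 1 := SimpleGraph.dist_eq_one_iff_adj.mpr hw
    have h1 : G.dist y w ≤ G.dist y u + G.dist u w := hc.dist_triangle
    have h2 : G.dist x w ≤ G.dist x u + G.dist u w := hc.dist_triangle
    have h3 : G.dist y w ≤ G.dist y x + G.dist x w := hc.dist_triangle
    have hcm1 : G.dist w y = G.dist y w := SimpleGraph.dist_comm
    have hcm2 : G.dist u y = G.dist y u := SimpleGraph.dist_comm
    have hwA : w ∈ A := by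
      simp only [hA, Finset.mem_filter, Finset.mem_univ, true_and]
      omega
    have := hu w hwA
    omega
  -- step 2 : pick v maximizing dist u v among B
  set B : Finset V := Finset.univ.filter (fun w => G.dist u y + G.dist y w = G.dist u w)
    with hB
  have hyB : y ∈ B := by simp [hB]
  obtain ⟨v, hvB, hv⟩ := B.exists_max_image (fun w => G.dist u w) ⟨y, hyB⟩
  have hvB' : G.dist u y + G.dist y v = G.dist u v := by
    simpa [hB] using hvB
  have hvu : MaxDistFrom G v u := by
    intro w hw
    by_contra hlt
    push_neg at hlt
    have hdw : G.dist v w = 1 := SimpleGraph.dist_eq_one_iff_adj.mpr hw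
    have h1 : G.dist u w ≤ G.dist u v + G.dist v w := hc.dist_triangle
    have h2 : G.dist y w ≤ G.dist y v + G.dist v w := hc.dist_triangle
    have h3 : G.dist u w ≤ G.dist u y + G.dist y w := hc.dist_triangle
    have hcm1 : G.dist w u = G.dist u w := SimpleGraph.dist_comm
    have hcm2 : G.dist v u = G.dist u v := SimpleGraph.dist_comm
    have hwB : w ∈ B := by
      simp only [hB, Finset.mem_filter, Finset.mem_univ, true_and]
      omega
    have := hv w hwB
    omega
  have huv : MaxDistFrom G u v := by
    intro w hw
    have h1 : G.dist w y ≤ G.dist u y := huy w hw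
    have h2 : G.dist w v ≤ G.dist w y + G.dist y v := hc.dist_triangle
    omega
  have hxypos : 0 < G.dist y x := hc.pos_dist_of_ne (Ne.symm hxy)
  have hcm3 : G.dist u y = G.dist y u := SimpleGraph.dist_comm
  have hne : u ≠ v := by
    intro h
    have : G.dist u v = 0 := h ▸ SimpleGraph.dist_self
    omega
  refine ⟨u, v, ⟨hne, huv, hvu⟩, ?_, ?_⟩
  · rw [mem_Sset_iff hc]
    exact Or.inl huA'
  · rw [mem_Sset_iff hc]
    right
    have t1 : G.dist u v ≤ G.dist u x + G.dist x v := hc.dist_triangle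
    have t2 : G.dist x v ≤ G.dist x y + G.dist y v := hc.dist_triangle
    have hcm4 : G.dist u x = G.dist x u := SimpleGraph.dist_comm
    have hcm5 : G.dist x y = G.dist y x := SimpleGraph.dist_comm
    omega

lemma isSRF_iff (hc : G.Connected) {g : V → ℝ} :
    IsSRF G g ↔ (∀ v, 0 ≤ g v ∧ g v ≤ 1) ∧
      ∀ u v : V, MMD G u v → 1 ≤ g u + g v := by
  classical
  constructor
  · rintro ⟨hb, hs⟩
    refine ⟨hb, fun u v h => ?_⟩
    have := hs u v h.1
    rwa [Sset_eq_of_MMD hc h, finsum_mem_pair h.1] at this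
  · rintro ⟨hb, hs⟩
    refine ⟨hb, fun x y hxy => ?_⟩
    obtain ⟨u, v, hmmd, hus, hvs⟩ := exists_MMD_mem_Sset hc hxy
    have hfin : (Sset G x y).Finite := Set.toFinite _
    rw [finsum_mem_eq_finite_toFinset_sum _ hfin]
    have hsub : ({u, v} : Finset V) ⊆ hfin.toFinset := by
      intro z hz
      simp only [Finset.mem_insert, Finset.mem_singleton] at hz
      rcases hz with rfl | rfl
      · exact hfin.mem_toFinset.mpr hus
      · exact hfin.mem_toFinset.mpr hvs
    calc (1:ℝ) ≤ g u + g v := hs u v hmmd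
      _ = ∑ z ∈ ({u, v} : Finset V), g z := (Finset.sum_pair hmmd.1).symm
      _ ≤ ∑ z ∈ hfin.toFinset, g z :=
          Finset.sum_le_sum_of_subset_of_nonneg hsub (fun i _ _ => (hb i).1)

lemma isSRF_one (hc : G.Connected) : IsSRF G (fun _ => (1:ℝ)) := by
  rw [isSRF_iff hc]
  exact ⟨fun v => by norm_num, fun u v _ => by norm_num⟩

lemma sdimf_le (hg : IsSRF G g) : sdimf G ≤ ∑ᶠ v, g v := by
  apply csInf_le
  · refine ⟨0, ?_⟩
    rintro s ⟨f, hf, rfl⟩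
    rw [finsum_eq_sum_of_fintype]
    exact Finset.sum_nonneg (fun i _ => (hf.1 i).1)
  · exact ⟨g, hg, rfl⟩

lemma le_sdimf (hc : G.Connected) {c : ℝ}
    (h : ∀ g : V → ℝ, IsSRF G g → c ≤ ∑ᶠ v, g v) : c ≤ sdimf G := by
  apply le_csInf
  · exact ⟨∑ᶠ _ : V, (1:ℝ), (fun _ => 1), isSRF_one hc, rfl⟩
  · rintro s ⟨f, hf, rfl⟩
    exact h f hf

lemma sdimf_nonneg (hc : G.Connected) : 0 ≤ sdimf G :=
  le_sdimf hc (fun g hg => by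
    rw [finsum_eq_sum_of_fintype]
    exact Finset.sum_nonneg (fun i _ => (hg.1 i).1))

end MMDex

section Lex

variable {V W : Type*} [Fintype V] [Fintype W] {G : SimpleGraph V} {H : SimpleGraph W}

lemma exists_adj_of_card (hG : G.Connected) (hn : 2 ≤ Fintype.card V) (u : V) :
    ∃ w, G.Adj u w := by
  obtain ⟨x, hx⟩ := Fintype.exists_ne_of_one_lt_card (by omega) u
  obtain ⟨p⟩ := hG u x
  cases p with
  | nil => exact absurd rfl hx
  | cons h q => exact ⟨_, h⟩

lemma lex_reach_of_walk {a b : V} (p : G.Walk a b) :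
    ∀ (v v' : W), a ≠ b → (lexProd G H).Reachable (a, v) (b, v') := by
  induction p with
  | nil => exact fun v v' h => absurd rfl h
  | @cons a c b h q ih =>
    intro v v' hab
    by_cases hcb : c = b
    · subst hcb
      exact SimpleGraph.Adj.reachable (Or.inl h)
    · exact (SimpleGraph.Adj.reachable (Or.inl h)).trans (ih v' v' hcb)

lemma lex_connected (hG : G.Connected) (hn : 2 ≤ Fintype.card V)
    (hW : Nonempty W) : (lexProd G H).Connected := by
  have hV : Nonempty V := hG.nonempty
  rw [SimpleGraph.connected_iff]
  refine ⟨?_, ⟨(hV.some, hW.some)⟩⟩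
  rintro ⟨u, v⟩ ⟨u', v'⟩
  by_cases h : u = u'
  · subst h
    obtain ⟨w, hw⟩ := exists_adj_of_card hG hn u
    have r1 : (lexProd G H).Adj (u, v) (w, v) := Or.inl hw
    have r2 : (lexProd G H).Adj (w, v) (u, v') := Or.inl (G.adj_symm hw)
    exact r1.reachable.trans r2.reachable
  · obtain ⟨p⟩ := hG u u'
    exact lex_reach_of_walk p v v' h

lemma lex_dist_fst_le {x y : V × W} (p : (lexProd G H).Walk x y) (hG : G.Connected) :
    G.dist x.1 y.1 ≤ p.length := by
  induction p with
  | nil => simp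
  | @cons a c b h q ih =>
    rw [SimpleGraph.Walk.length_cons]
    rcases h with h | ⟨h1, _⟩
    · have h1 : G.dist a.1 c.1 = 1 := SimpleGraph.dist_eq_one_iff_adj.mpr h
      have h2 : G.dist a.1 b.1 ≤ G.dist a.1 c.1 + G.dist c.1 b.1 := hG.dist_triangle
      omega
    · rw [h1]
      omega

lemma exists_lex_walk {a b : V} (p : G.Walk a b) :
    ∀ (v v' : W), a ≠ b →
      ∃ q : (lexProd G H).Walk (a, v) (b, v'), q.length ≤ p.length := by
  induction p with
  | nil => exact fun v v' h => absurd rfl h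
  | @cons a c b h q ih =>
    intro v v' hab
    by_cases hcb : c = b
    · subst hcb
      exact ⟨SimpleGraph.Walk.cons (Or.inl h : (lexProd G H).Adj (a, v) (c, v')) SimpleGraph.Walk.nil, by show 1 ≤ q.length + 1; omega⟩
    · obtain ⟨r, hr⟩ := ih v' v' hcb
      exact ⟨SimpleGraph.Walk.cons (Or.inl h : (lexProd G H).Adj (a, v) (c, v')) r, by
        show r.length + 1 ≤ q.length + 1; omega⟩

lemma lex_dist_ne (hG : G.Connected) {u u' : V} (v v' : W) (h : u ≠ u') :
    (lexProd G H).dist (u, v) (u', v') = G.dist u u' := by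
  apply le_antisymm
  · obtain ⟨p, hp⟩ := hG.exists_walk_length_eq_dist u u'
    obtain ⟨q, hq⟩ := exists_lex_walk p v v' h
    exact (SimpleGraph.dist_le q).trans (hq.trans_eq hp)
  · obtain ⟨p⟩ := hG u u'
    obtain ⟨q, hq⟩ := ((lex_reach_of_walk p v v' h)).exists_walk_length_eq_dist
    exact hq ▸ lex_dist_fst_le q hG

lemma dist_le_two_of_diam (hH : H.Connected) (hm : 2 ≤ Fintype.card W)
    (hdiam : H.diam ≤ 2) (v v' : W) : H.dist v v' ≤ 2 := by
  have hW : Nonempty W := hH.nonempty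
  have htop : H.ediam ≠ ⊤ := by
    obtain ⟨a, b, hab⟩ := SimpleGraph.exists_edist_eq_ediam_of_finite (G := H)
    rw [← hab]
    exact (SimpleGraph.edist_ne_top_iff_reachable).mpr (hH a b)
  exact (SimpleGraph.dist_le_diam htop).trans hdiam

lemma lex_dist_eq_snd (hG : G.Connected) (hn : 2 ≤ Fintype.card V)
    (hH : H.Connected) (hm : 2 ≤ Fintype.card W) (hdiam : H.diam ≤ 2)
    (u : V) (v v' : W) :
    (lexProd G H).dist (u, v) (u, v') = H.dist v v' := by
  by_cases hv : v = v'
  · subst hv; rw [SimpleGraph.dist_self, SimpleGraph.dist_self]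
  by_cases hadj : H.Adj v v'
  · have h1 : (lexProd G H).Adj (u, v) (u, v') := Or.inr ⟨rfl, hadj⟩
    rw [SimpleGraph.dist_eq_one_iff_adj.mpr h1, SimpleGraph.dist_eq_one_iff_adj.mpr hadj]
  · have hL : (lexProd G H).Connected := lex_connected hG hn hH.nonempty
    have hH2 : H.dist v v' = 2 := by
      have h1 : 0 < H.dist v v' := hH.pos_dist_of_ne hv
      have h2 : H.dist v v' ≤ 2 := dist_le_two_of_diam hH hm hdiam v v'
      have h3 : H.dist v v' ≠ 1 := fun h => hadj (SimpleGraph.dist_eq_one_iff_adj.mp h)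
      omega
    have hLne : ((u, v) : V × W) ≠ (u, v') :=
      fun h => hv (congrArg Prod.snd h)
    have h1 : 0 < (lexProd G H).dist (u, v) (u, v') := hL.pos_dist_of_ne hLne
    have h3 : (lexProd G H).dist (u, v) (u, v') ≠ 1 := by
      intro h
      rcases SimpleGraph.dist_eq_one_iff_adj.mp h with h' | ⟨_, h'⟩
      · exact (G.ne_of_adj h') rfl
      · exact hadj h'
    have h2 : (lexProd G H).dist (u, v) (u, v') ≤ 2 := by
      obtain ⟨w, hw⟩ := exists_adj_of_card hG hn u
      have r1 : (lexProd G H).Adj (u, v) (w, v) := Or.inl hw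
      have r2 : (lexProd G H).Adj (w, v) (u, v') := Or.inl (G.adj_symm hw)
      have hq : ∃ q : (lexProd G H).Walk (u, v) (u, v'), q.length = 2 :=
        ⟨SimpleGraph.Walk.cons r1 (SimpleGraph.Walk.cons r2 SimpleGraph.Walk.nil), by simp⟩
      obtain ⟨q, hql⟩ := hq
      exact hql ▸ SimpleGraph.dist_le q
    omega
  
end Lex

section Lex2

variable {V W : Type*} [Fintype V] [Fintype W] {G : SimpleGraph V} {H : SimpleGraph W}

lemma not_adj_of_MMD (hG : G.Connected)
    (htwinfree : ∀ u v : V,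
      insert u (G.neighborSet u) = insert v (G.neighborSet v) → u = v)
    {u u' : V} (h : MMD G u u') : ¬ G.Adj u u' := by
  intro hadj
  have key : ∀ a b : V, MaxDistFrom G a b → G.Adj a b →
      insert a (G.neighborSet a) ⊆ insert b (G.neighborSet b) := by
    intro a b hmax hab x hx
    rcases hx with rfl | hx
    · exact Or.inr (G.adj_symm hab)
    · have h1 : G.dist x b ≤ G.dist a b := hmax x hx
      rw [SimpleGraph.dist_eq_one_iff_adj.mpr hab] at h1
      interval_cases h2 : G.dist x b
      · exact Or.inl ((hG.dist_eq_zero_iff).mp h2)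
      · exact Or.inr (G.adj_symm (SimpleGraph.dist_eq_one_iff_adj.mp h2))
  have h1 := key u u' h.2.1 hadj
  have h2 := key u' u h.2.2 (G.adj_symm hadj)
  exact h.1 (htwinfree u u' (le_antisymm h1 h2))

lemma MMD_lex_iff (hG : G.Connected) (hn : 2 ≤ Fintype.card V)
    (htwinfree : ∀ u v : V,
      insert u (G.neighborSet u) = insert v (G.neighborSet v) → u = v)
    (hH : H.Connected) (hm : 2 ≤ Fintype.card W) (hdiam : H.diam ≤ 2)
    {u u' : V} {v v' : W} :
    MMD (lexProd G H) (u, v) (u', v') ↔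
      ((u ≠ u' ∧ MMD G u u') ∨ (u = u' ∧ MMD H v v')) := by
  constructor
  · rintro ⟨hne, h1, h2⟩
    by_cases h : u = u'
    · subst h
      have hvv : v ≠ v' := fun hv => hne (by rw [hv])
      refine Or.inr ⟨rfl, hvv, ?_, ?_⟩
      · intro c hc
        have := h1 (u, c) (Or.inr ⟨rfl, hc⟩)
        rwa [lex_dist_eq_snd hG hn hH hm hdiam,
          lex_dist_eq_snd hG hn hH hm hdiam] at this
      · intro c hc
        have := h2 (u, c) (Or.inr ⟨rfl, hc⟩)
        rwa [lex_dist_eq_snd hG hn hH hm hdiam,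
          lex_dist_eq_snd hG hn hH hm hdiam] at this
    · refine Or.inl ⟨h, h, ?_, ?_⟩
      · intro w hw
        by_cases hwu : w = u'
        · subst hwu
          rw [SimpleGraph.dist_self]
          omega
        · have := h1 (w, v') (Or.inl hw)
          rwa [lex_dist_ne hG _ _ hwu, lex_dist_ne hG _ _ h] at this
      · intro w hw
        by_cases hwu : w = u
        · subst hwu
          rw [SimpleGraph.dist_self]
          omega
        · have := h2 (w, v) (Or.inl hw)
          rwa [lex_dist_ne hG _ _ hwu, lex_dist_ne hG _ _ (Ne.symm h)] at this
  · rintro (⟨hne, hmmd⟩ | ⟨rfl, hmmd⟩)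
    · have hnadj : ¬ G.Adj u u' := not_adj_of_MMD hG htwinfree hmmd
      refine ⟨fun hEq => hne (congrArg Prod.fst hEq), ?_, ?_⟩
      · rintro ⟨w, c⟩ (hadj | ⟨heq, hHadj⟩)
        · have hwne : w ≠ u' := fun hh => hnadj (hh ▸ hadj)
          rw [lex_dist_ne hG _ _ hwne, lex_dist_ne hG _ _ hne]
          exact hmmd.2.1 w hadj
        · simp only at heq
          subst heq
          rw [lex_dist_ne hG _ _ hne, lex_dist_ne hG _ _ hne]
      · rintro ⟨w, c⟩ (hadj | ⟨heq, hHadj⟩)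
        · have hwne : w ≠ u := fun hh => hnadj (G.adj_symm (hh ▸ hadj))
          rw [lex_dist_ne hG _ _ hwne, lex_dist_ne hG _ _ (Ne.symm hne)]
          exact hmmd.2.2 w hadj
        · simp only at heq
          subst heq
          rw [lex_dist_ne hG _ _ (Ne.symm hne), lex_dist_ne hG _ _ (Ne.symm hne)]
    · have hvv := hmmd.1
      refine ⟨fun hEq => hvv (congrArg Prod.snd hEq), ?_, ?_⟩
      · rintro ⟨w, c⟩ (hadj | ⟨heq, hHadj⟩)
        · simp only at hadj
          rw [lex_dist_ne hG _ _ (G.ne_of_adj hadj).symm,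
            lex_dist_eq_snd hG hn hH hm hdiam]
          rw [SimpleGraph.dist_eq_one_iff_adj.mpr (G.adj_symm hadj)]
          have := hH.pos_dist_of_ne hvv
          omega
        · simp only at heq
          subst heq
          rw [lex_dist_eq_snd hG hn hH hm hdiam, lex_dist_eq_snd hG hn hH hm hdiam]
          exact hmmd.2.1 c hHadj
      · rintro ⟨w, c⟩ (hadj | ⟨heq, hHadj⟩)
        · simp only at hadj
          rw [lex_dist_ne hG _ _ (G.ne_of_adj hadj).symm,
            lex_dist_eq_snd hG hn hH hm hdiam]
          rw [SimpleGraph.dist_eq_one_iff_adj.mpr (G.adj_symm hadj)]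
          have := hH.pos_dist_of_ne (Ne.symm hvv)
          omega
        · simp only at heq
          subst heq
          rw [lex_dist_eq_snd hG hn hH hm hdiam, lex_dist_eq_snd hG hn hH hm hdiam]
          exact hmmd.2.2 c hHadj

lemma Mset_lex_eq (hG : G.Connected) (hn : 2 ≤ Fintype.card V)
    (htwinfree : ∀ u v : V,
      insert u (G.neighborSet u) = insert v (G.neighborSet v) → u = v)
    (hH : H.Connected) (hm : 2 ≤ Fintype.card W) (hdiam : H.diam ≤ 2) :
    Mset (lexProd G H) = (Mset G ×ˢ Set.univ) ∪ (Set.univ ×ˢ Mset H) := by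
  ext ⟨u, v⟩
  constructor
  · rintro ⟨⟨u', v'⟩, hmmd⟩
    rw [MMD_lex_iff hG hn htwinfree hH hm hdiam] at hmmd
    rcases hmmd with ⟨hne, hmmd⟩ | ⟨heq, hmmd⟩
    · exact Or.inl ⟨⟨u', hmmd⟩, Set.mem_univ _⟩
    · exact Or.inr ⟨Set.mem_univ _, ⟨v', hmmd⟩⟩
  · rintro (⟨⟨u', hmmd⟩, -⟩ | ⟨-, ⟨v', hmmd⟩⟩)
    · exact ⟨(u', v),
        (MMD_lex_iff hG hn htwinfree hH hm hdiam).mpr (Or.inl ⟨hmmd.1, hmmd⟩)⟩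
    · exact ⟨(u, v'),
        (MMD_lex_iff hG hn htwinfree hH hm hdiam).mpr (Or.inr ⟨rfl, hmmd⟩)⟩

end Lex2

lemma myncard_prod {α β : Type*} (s : Set α) (t : Set β) :
    (s ×ˢ t).ncard = s.ncard * t.ncard := by
  rw [← Nat.card_coe_set_eq, ← Nat.card_coe_set_eq, ← Nat.card_coe_set_eq,
    Nat.card_congr (Equiv.Set.prod s t), Nat.card_prod]

lemma MMD_symm {V : Type*} {G : SimpleGraph V} {u v : V} (h : MMD G u v) :
    MMD G v u := ⟨h.1.symm, h.2.2, h.2.1⟩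


/-- Let `G` be connected of order `n ≥ 2` without true twin vertices,
and let `H` be connected of order `m ≥ 2` with `diam(H) ≤ 2`; put `n' = |M(G)|` and
`m' = |M(H)|`. Then
`sdim_f(G[H]) ≥ max{ n·sdim_f(H) + (m−m')·sdim_f(G), (n−n')·sdim_f(H) + m·sdim_f(G) }`
and `sdim_f(G[H]) ≤ (nm' + mn' − n'm')/2`. -/
theorem sdimf_lexProd_bounds {V W : Type*} [Fintype V] [Fintype W]
    (G : SimpleGraph V) (H : SimpleGraph W)
    (hG : G.Connected) (hn : 2 ≤ Fintype.card V)
    (htwinfree : ∀ u v : V,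
      insert u (G.neighborSet u) = insert v (G.neighborSet v) → u = v)
    (hH : H.Connected) (hm : 2 ≤ Fintype.card W) (hdiam : H.diam ≤ 2) :
    max ((Fintype.card V : ℝ) * sdimf H
          + ((Fintype.card W : ℝ) - ((Mset H).ncard : ℝ)) * sdimf G)
        (((Fintype.card V : ℝ) - ((Mset G).ncard : ℝ)) * sdimf H
          + (Fintype.card W : ℝ) * sdimf G)
      ≤ sdimf (lexProd G H) ∧
    sdimf (lexProd G H) ≤
      ((Fintype.card V : ℝ) * ((Mset H).ncard : ℝ)
        + (Fintype.card W : ℝ) * ((Mset G).ncard : ℝ)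
        - ((Mset G).ncard : ℝ) * ((Mset H).ncard : ℝ)) / 2 := by
  classical
  have hL : (lexProd G H).Connected := lex_connected hG hn hH.nonempty
  set n : ℕ := Fintype.card V
  set m : ℕ := Fintype.card W
  set n' : ℕ := (Mset G).ncard with hn'
  set m' : ℕ := (Mset H).ncard with hm'
  have hmml := fun {u u' : V} {v v' : W} =>
    MMD_lex_iff (H := H) hG hn htwinfree hH hm hdiam (u := u) (u' := u') (v := v) (v' := v')
  -- Finset versions of the M-sets
  set MGfin : Finset V := Finset.univ.filter (fun u => u ∈ Mset G) with hMGfin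
  set MHfin : Finset W := Finset.univ.filter (fun c => c ∈ Mset H) with hMHfin
  have hMGcard : MGfin.card = n' := by
    rw [hn', Set.ncard_eq_toFinset_card _ (Set.toFinite _)]
    congr 1
    ext u
    simp [hMGfin, Set.Finite.mem_toFinset, Mset, Set.mem_setOf_eq]
    exact (@Finset.mem_filter _ _ (fun a => Classical.propDecidable (a ∈ Mset G)) _ _).trans
      (and_iff_right (Finset.mem_univ _))
  have hMHcard : MHfin.card = m' := by
    rw [hm', Set.ncard_eq_toFinset_card _ (Set.toFinite _)]
    congr 1
    ext c
    simp [hMHfin, Set.Finite.mem_toFinset, Mset, Set.mem_setOf_eq]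
    exact (@Finset.mem_filter _ _ (fun a => Classical.propDecidable (a ∈ Mset H)) _ _).trans
      (and_iff_right (Finset.mem_univ _))
  have hn'le : n' ≤ n := by
    rw [← hMGcard]
    exact (Finset.card_filter_le _ _).trans (by simp [n])
  have hm'le : m' ≤ m := by
    rw [← hMHcard]
    exact (Finset.card_filter_le _ _).trans (by simp [m])
  constructor
  · -- lower bounds
    apply max_le
    · apply le_sdimf hL
      intro g hg
      have hbnd := hg.1
      have hpair := ((isSRF_iff hL).mp hg).2
      have hrowc : ∀ (u : V) (v v' : W), MMD H v v' → 1 ≤ g (u, v) + g (u, v') :=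
        fun u v v' h => hpair _ _ (hmml.mpr (Or.inr ⟨rfl, h⟩))
      have hcolc : ∀ (u u' : V) (v v' : W), MMD G u u' → 1 ≤ g (u, v) + g (u', v') :=
        fun u u' v v' h => hpair _ _ (hmml.mpr (Or.inl ⟨h.1, h⟩))
      -- row bound (restricted to M(H))
      have hrow : ∀ u : V, sdimf H ≤ ∑ c ∈ MHfin, g (u, c) := by
        intro u
        have hr : IsSRF H (fun c => if c ∈ Mset H then g (u, c) else 0) := by
          rw [isSRF_iff hH]
          constructor
          · intro c
            by_cases h : c ∈ Mset H <;> simp [h, (hbnd (u, c)).1, (hbnd (u, c)).2]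
          · intro v v' h
            rw [if_pos ⟨v', h⟩, if_pos ⟨v, MMD_symm h⟩]
            exact hrowc u v v' h
        have := sdimf_le hr
        rwa [finsum_eq_sum_of_fintype,
          ← Finset.sum_filter (fun c => c ∈ Mset H) (fun c => g (u, c))] at this
      -- column bound (full column)
      have hcol : ∀ c : W, sdimf G ≤ ∑ u, g (u, c) := by
        intro c
        have hr : IsSRF G (fun u => g (u, c)) := by
          rw [isSRF_iff hG]
          exact ⟨fun u => hbnd (u, c), fun u u' h => hcolc u u' c c h⟩
        have := sdimf_le hr
        rwa [finsum_eq_sum_of_fintype] at this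
      rw [finsum_eq_sum_of_fintype, Fintype.sum_prod_type]
      have hsplit : ∀ u : V, ∑ c, g (u, c)
          = ∑ c ∈ MHfin, g (u, c) + ∑ c ∈ Finset.univ.filter (fun c => c ∉ Mset H), g (u, c) := by
        intro u
        rw [hMHfin, Finset.sum_filter_add_sum_filter_not]
      have h1 : (n : ℝ) * sdimf H ≤ ∑ u, ∑ c ∈ MHfin, g (u, c) := by
        have := Finset.card_nsmul_le_sum Finset.univ
          (fun u => ∑ c ∈ MHfin, g (u, c)) (sdimf H) (fun u _ => hrow u)
        rwa [Finset.card_univ, nsmul_eq_mul] at this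
      have h2 : ((m : ℝ) - (m' : ℝ)) * sdimf G
          ≤ ∑ u, ∑ c ∈ Finset.univ.filter (fun c => c ∉ Mset H), g (u, c) := by
        rw [Finset.sum_comm]
        have hb := Finset.card_nsmul_le_sum (Finset.univ.filter (fun c => c ∉ Mset H))
          (fun c => ∑ u, g (u, c)) (sdimf G) (fun c _ => hcol c)
        rw [nsmul_eq_mul] at hb
        have hcnt : MHfin.card + (Finset.univ.filter (fun c => c ∉ Mset H)).card = m := by
          rw [hMHfin]
          rw [Finset.card_filter_add_card_filter_not]
          · simp [m]
        have hcast : (((Finset.univ.filter (fun c => c ∉ Mset H)).card : ℕ) : ℝ)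
            = (m : ℝ) - (m' : ℝ) := by
          rw [← hMHcard]
          push_cast [← hcnt]
          ring
        rwa [hcast] at hb
      calc (n : ℝ) * sdimf H + ((m : ℝ) - (m' : ℝ)) * sdimf G
          ≤ (∑ u, ∑ c ∈ MHfin, g (u, c))
            + ∑ u, ∑ c ∈ Finset.univ.filter (fun c => c ∉ Mset H), g (u, c) :=
            add_le_add h1 h2
        _ = ∑ u, ∑ c, g (u, c) := by
            rw [← Finset.sum_add_distrib]
            exact Finset.sum_congr rfl (fun u _ => (hsplit u).symm)
    · apply le_sdimf hL
      intro g hg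
      have hbnd := hg.1
      have hpair := ((isSRF_iff hL).mp hg).2
      have hrowc : ∀ (u : V) (v v' : W), MMD H v v' → 1 ≤ g (u, v) + g (u, v') :=
        fun u v v' h => hpair _ _ (hmml.mpr (Or.inr ⟨rfl, h⟩))
      have hcolc : ∀ (u u' : V) (v v' : W), MMD G u u' → 1 ≤ g (u, v) + g (u', v') :=
        fun u u' v v' h => hpair _ _ (hmml.mpr (Or.inl ⟨h.1, h⟩))
      -- full rows
      have hrow : ∀ u : V, sdimf H ≤ ∑ c, g (u, c) := by
        intro u
        have hr : IsSRF H (fun c => g (u, c)) := by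
          rw [isSRF_iff hH]
          exact ⟨fun c => hbnd (u, c), fun v v' h => hrowc u v v' h⟩
        have := sdimf_le hr
        rwa [finsum_eq_sum_of_fintype] at this
      -- columns restricted to M(G)
      have hcol : ∀ c : W, sdimf G ≤ ∑ u ∈ MGfin, g (u, c) := by
        intro c
        have hr : IsSRF G (fun u => if u ∈ Mset G then g (u, c) else 0) := by
          rw [isSRF_iff hG]
          constructor
          · intro u
            by_cases h : u ∈ Mset G <;> simp [h, (hbnd (u, c)).1, (hbnd (u, c)).2]
          · intro u u' h
            rw [if_pos ⟨u', h⟩, if_pos ⟨u, MMD_symm h⟩]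
            exact hcolc u u' c c h
        have := sdimf_le hr
        rwa [finsum_eq_sum_of_fintype,
          ← Finset.sum_filter (fun u => u ∈ Mset G) (fun u => g (u, c))] at this
      rw [finsum_eq_sum_of_fintype, Fintype.sum_prod_type]
      have hsplit : ∑ u, ∑ c, g (u, c)
          = ∑ u ∈ MGfin, ∑ c, g (u, c)
            + ∑ u ∈ Finset.univ.filter (fun u => u ∉ Mset G), ∑ c, g (u, c) := by
        rw [hMGfin, Finset.sum_filter_add_sum_filter_not]
      have h1 : (m : ℝ) * sdimf G ≤ ∑ u ∈ MGfin, ∑ c, g (u, c) := by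
        rw [Finset.sum_comm]
        have := Finset.card_nsmul_le_sum Finset.univ
          (fun c => ∑ u ∈ MGfin, g (u, c)) (sdimf G) (fun c _ => hcol c)
        rwa [Finset.card_univ, nsmul_eq_mul] at this
      have h2 : ((n : ℝ) - (n' : ℝ)) * sdimf H
          ≤ ∑ u ∈ Finset.univ.filter (fun u => u ∉ Mset G), ∑ c, g (u, c) := by
        have hb := Finset.card_nsmul_le_sum (Finset.univ.filter (fun u => u ∉ Mset G))
          (fun u => ∑ c, g (u, c)) (sdimf H) (fun u _ => hrow u)
        rw [nsmul_eq_mul] at hb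
        have hcnt : MGfin.card + (Finset.univ.filter (fun u => u ∉ Mset G)).card = n := by
          rw [hMGfin]
          rw [Finset.card_filter_add_card_filter_not]
          · simp [n]
        have hcast : (((Finset.univ.filter (fun u => u ∉ Mset G)).card : ℕ) : ℝ)
            = (n : ℝ) - (n' : ℝ) := by
          rw [← hMGcard]
          push_cast [← hcnt]
          ring
        rwa [hcast] at hb
      rw [hsplit]
      linarith
  · -- upper bound
    set g : V × W → ℝ := fun z => if z ∈ Mset (lexProd G H) then (1:ℝ)/2 else 0 with hgdef
    have hSRF : IsSRF (lexProd G H) g := by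
      rw [isSRF_iff hL]
      constructor
      · intro z
        by_cases h : z ∈ Mset (lexProd G H) <;> simp [hgdef, h] <;> norm_num
      · intro z z' h
        have hz : z ∈ Mset (lexProd G H) := ⟨z', h⟩
        have hz' : z' ∈ Mset (lexProd G H) := ⟨z, MMD_symm h⟩
        simp only [hgdef, if_pos hz, if_pos hz']
        norm_num
    have hle := sdimf_le hSRF
    have hsum : ∑ᶠ z, g z = ((Mset (lexProd G H)).ncard : ℝ) / 2 := by
      rw [finsum_eq_sum_of_fintype]
      rw [hgdef]
      rw [Finset.sum_ite, Finset.sum_const, Finset.sum_const_zero, add_zero]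
      have hcard : (Finset.univ.filter (fun z => z ∈ Mset (lexProd G H))).card
          = (Mset (lexProd G H)).ncard := by
        rw [Set.ncard_eq_toFinset_card _ (Set.toFinite _)]
        congr 1
        ext z
        simp [Set.Finite.mem_toFinset, Mset]
      rw [hcard, nsmul_eq_mul]
      ring
    -- inclusion–exclusion for the cardinality
    have hM : Mset (lexProd G H) = (Mset G ×ˢ Set.univ) ∪ (Set.univ ×ˢ Mset H) :=
      Mset_lex_eq hG hn htwinfree hH hm hdiam
    have hie := Set.ncard_union_add_ncard_inter (Mset G ×ˢ (Set.univ : Set W))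
      ((Set.univ : Set V) ×ˢ Mset H) (Set.toFinite _) (Set.toFinite _)
    rw [Set.prod_inter_prod, Set.inter_univ, Set.univ_inter] at hie
    rw [myncard_prod, myncard_prod, myncard_prod, Set.ncard_univ, Set.ncard_univ,
      Nat.card_eq_fintype_card, Nat.card_eq_fintype_card] at hie
    have hcardL : ((Mset (lexProd G H)).ncard : ℝ)
        = (n : ℝ) * (m' : ℝ) + (m : ℝ) * (n' : ℝ) - (n' : ℝ) * (m' : ℝ) := by
      rw [hM]
      have : ((Mset G ×ˢ (Set.univ : Set W)) ∪ ((Set.univ : Set V) ×ˢ Mset H)).ncard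
          + n' * m' = n' * m + n * m' := hie
      have := congrArg (fun k : ℕ => (k : ℝ)) this
      push_cast at this
      linarith
    rw [hsum, hcardL] at hle
    calc sdimf (lexProd G H)
        ≤ ((n : ℝ) * (m' : ℝ) + (m : ℝ) * (n' : ℝ) - (n' : ℝ) * (m' : ℝ)) / 2 := hle
      _ = _ := by ring_nf
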